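/- Combining the previous two facts: for the SCM C = U_C, X = C·U_X, Y = C·X·U_Y with U_C, U_X ~ N(0,1) and U_Y ~ N(1,1) independent, the minimum of E[Y] over all hard interventions do(X = x), x ∈ ℝ, equals 0, while there exists a functional intervention X = π(C) achieving E[Y] = -1 < 0. -/

import Mathlib

open MeasureTheory ProbabilityTheory Real Filter

lemma vol_int_odd : ∫ x : ℝ, x * rexp (-(1/2 : ℝ) * x ^ 2) = 0 := by
  have h := (Measure.measurePreserving_neg (volume : Measure ℝ)).integral_comp
    (Homeomorph.neg ℝ).measurableEmbedding (fun x : ℝ => x * rexp (-(1/2 : ℝ) * x ^ 2))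
  simp only [neg_sq, neg_mul] at h
  rw [integral_neg] at h
  have e : ∀ x : ℝ, (-(1/2 : ℝ)) * x ^ 2 = -(1/2 * x ^ 2) := fun x => by ring
  simp_rw [e]
  linarith [h]

lemma vol_integrable_exp : Integrable (fun x : ℝ => rexp (-(1/2 : ℝ) * x ^ 2)) := by
  simpa using integrable_exp_neg_mul_sq (by norm_num : (0:ℝ) < 1/2)

lemma vol_integrable_mul : Integrable (fun x : ℝ => x * rexp (-(1/2 : ℝ) * x ^ 2)) := by
  simpa using integrable_mul_exp_neg_mul_sq (by norm_num : (0:ℝ) < 1/2)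

lemma vol_integrable_sq : Integrable (fun x : ℝ => x ^ 2 * rexp (-(1/2 : ℝ) * x ^ 2)) := by
  have h := integrable_rpow_mul_exp_neg_mul_sq (by norm_num : (0:ℝ) < 1/2) (s := 2) (by norm_num)
  refine h.congr (Filter.Eventually.of_forall fun x => ?_)
  norm_cast

lemma vol_int_sq : ∫ x : ℝ, x ^ 2 * rexp (-(1/2 : ℝ) * x ^ 2) = Real.sqrt (2 * π) := by
  have hv : ∀ x : ℝ, HasDerivAt (fun x : ℝ => rexp (-(1/2 : ℝ) * x ^ 2))
      (-x * rexp (-(1/2 : ℝ) * x ^ 2)) x := by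
    intro x
    have h1 : HasDerivAt (fun x : ℝ => -(1/2 : ℝ) * x ^ 2) (-x) x := by
      have := (hasDerivAt_pow 2 x).const_mul (-(1/2 : ℝ))
      simpa using this.congr_deriv (by ring)
    simpa [mul_comm] using h1.exp
  have hu : ∀ x : ℝ, HasDerivAt (fun x : ℝ => x) 1 x := fun x => hasDerivAt_id x
  have key := MeasureTheory.integral_mul_deriv_eq_deriv_mul_of_integrable
    (u := fun x : ℝ => x) (u' := fun _ => (1:ℝ))
    (v := fun x : ℝ => rexp (-(1/2 : ℝ) * x ^ 2))
    (v' := fun x : ℝ => -x * rexp (-(1/2 : ℝ) * x ^ 2))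
    (fun x _ => hu x) (fun x _ => hv x) ?_ ?_ ?_
  · have hG : ∫ x : ℝ, rexp (-(1/2 : ℝ) * x ^ 2) = Real.sqrt (2 * π) := by
      have := integral_gaussian (1/2 : ℝ)
      rw [this]; rw [show π / (1/2 : ℝ) = 2 * π by ring]
    have : ∫ x : ℝ, x * (-x * rexp (-(1/2 : ℝ) * x ^ 2)) =
        - ∫ x : ℝ, x ^ 2 * rexp (-(1/2 : ℝ) * x ^ 2) := by
      rw [← integral_neg]; congr 1; ext x; ring
    rw [this] at key
    simp only [Pi.mul_apply, one_mul] at key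
    rw [hG] at key; linarith
  · have : Integrable (fun x : ℝ => -(x ^ 2 * rexp (-(1/2 : ℝ) * x ^ 2))) := vol_integrable_sq.neg
    refine this.congr (Filter.Eventually.of_forall fun x => ?_)
    simp [Pi.mul_apply]; ring
  · refine vol_integrable_exp.congr (Filter.Eventually.of_forall fun x => ?_)
    simp [Pi.mul_apply]
  · refine vol_integrable_mul.congr (Filter.Eventually.of_forall fun x => ?_)
    simp [Pi.mul_apply]

lemma pdf01 (x : ℝ) : gaussianPDFReal 0 1 x = (Real.sqrt (2*π))⁻¹ * rexp (-(1/2:ℝ) * x ^ 2) := by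
  have h1 : ((1:NNReal):ℝ) = 1 := rfl
  simp only [gaussianPDFReal, h1, mul_one, sub_zero]
  congr 1
  ring

lemma integral_gauss01 (f : ℝ → ℝ) :
    ∫ x, f x ∂(gaussianReal 0 1) = ∫ x, gaussianPDFReal 0 1 x * f x := by
  rw [gaussianReal_of_var_ne_zero 0 one_ne_zero]
  have hm : Measurable fun x => (gaussianPDFReal 0 1 x).toNNReal :=
    (measurable_gaussianPDFReal 0 1).real_toNNReal
  have hpdf : (gaussianPDF 0 1) = fun x => ((gaussianPDFReal 0 1 x).toNNReal : ENNReal) := by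
    funext x; rw [gaussianPDF, ENNReal.ofReal]
  rw [hpdf, integral_withDensity_eq_integral_smul hm]
  congr 1; funext x
  rw [NNReal.smul_def, smul_eq_mul, Real.coe_toNNReal _ (gaussianPDFReal_nonneg 0 1 x)]

lemma integrable_gauss01 (f : ℝ → ℝ) (h : Integrable (fun x => f x * gaussianPDFReal 0 1 x)) :
    Integrable f (gaussianReal 0 1) := by
  rw [gaussianReal_of_var_ne_zero 0 one_ne_zero,
    integrable_withDensity_iff (measurable_gaussianPDF 0 1)
      (ae_of_all _ fun x => ENNReal.ofReal_lt_top)]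
  refine h.congr (Eventually.of_forall fun x => ?_)
  simp only [gaussianPDF_def]
  rw [ENNReal.toReal_ofReal (gaussianPDFReal_nonneg 0 1 x)]


lemma sqrt2pi_ne : Real.sqrt (2*π) ≠ 0 := ne_of_gt (Real.sqrt_pos.2 (by positivity))

lemma integrable_id_gauss01 : Integrable (fun x : ℝ => x) (gaussianReal 0 1) := by
  refine integrable_gauss01 _ ?_
  refine (vol_integrable_mul.const_mul ((Real.sqrt (2*π))⁻¹)).congr
    (Eventually.of_forall fun x => ?_)
  simp only [pdf01]; ring

lemma int_id_gauss01 : ∫ x, x ∂(gaussianReal 0 1) = 0 := by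
  rw [integral_gauss01]
  have h : ∀ x : ℝ, gaussianPDFReal 0 1 x * x
      = (Real.sqrt (2*π))⁻¹ * (x * rexp (-(1/2:ℝ)*x^2)) := fun x => by simp only [pdf01]; ring
  simp_rw [h, MeasureTheory.integral_const_mul, vol_int_odd, mul_zero]

lemma integrable_sq_gauss01 : Integrable (fun x : ℝ => x ^ 2) (gaussianReal 0 1) := by
  refine integrable_gauss01 _ ?_
  refine (vol_integrable_sq.const_mul ((Real.sqrt (2*π))⁻¹)).congr
    (Eventually.of_forall fun x => ?_)
  simp only [pdf01]; ring

lemma int_sq_gauss01 : ∫ x, x ^ 2 ∂(gaussianReal 0 1) = 1 := by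
  rw [integral_gauss01]
  have h : ∀ x : ℝ, gaussianPDFReal 0 1 x * x ^ 2
      = (Real.sqrt (2*π))⁻¹ * (x ^ 2 * rexp (-(1/2:ℝ)*x^2)) := fun x => by simp only [pdf01]; ring
  simp_rw [h, MeasureTheory.integral_const_mul, vol_int_sq]
  exact inv_mul_cancel₀ sqrt2pi_ne

lemma map11 : gaussianReal 1 1 = (gaussianReal 0 1).map (fun x => x + 1) := by
  have h := gaussianReal_map_add_const (μ := 0) (v := 1) (1:ℝ)
  rw [zero_add] at h
  exact h.symm

lemma integrable_id_gauss11 : Integrable (fun x : ℝ => x) (gaussianReal 1 1) := by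
  rw [map11, integrable_map_measure (g := fun x : ℝ => x)
    measurable_id'.aestronglyMeasurable (by fun_prop : Measurable fun x : ℝ => x + 1).aemeasurable]
  exact integrable_id_gauss01.add (integrable_const 1)

lemma int_id_gauss11 : ∫ x, x ∂(gaussianReal 1 1) = 1 := by
  rw [map11, integral_map (f := fun x : ℝ => x) (by fun_prop : Measurable fun x : ℝ => x + 1).aemeasurable
    measurable_id'.aestronglyMeasurable]
  rw [integral_add integrable_id_gauss01 (integrable_const 1)]
  simp [int_id_gauss01]


/-- For the SCM C = U_C, X = C·U_X, Y = C·X·U_Y with U_C, U_X ~ N(0,1),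
U_Y ~ N(1,1) independent, every hard intervention do(X = x) gives E[Y] = 0 (so the
minimum over hard interventions is 0), while some measurable functional intervention
X = pol(C) achieves E[Y] = -1 < 0. -/
theorem stmt2 {Ω : Type*} [MeasurableSpace Ω] (P : Measure Ω) [IsProbabilityMeasure P]
    (UC UX UY : Ω → ℝ)
    (hInd : iIndepFun ![UC, UX, UY] P)
    (hUC : P.map UC = gaussianReal 0 1)
    (hUX : P.map UX = gaussianReal 0 1)
    (hUY : P.map UY = gaussianReal 1 1) :
    ({e : ℝ | ∃ x : ℝ, e = ∫ ω, UC ω * x * UY ω ∂P} = {0} ∧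
      IsLeast {e : ℝ | ∃ x : ℝ, e = ∫ ω, UC ω * x * UY ω ∂P} 0) ∧
    ∃ pol : ℝ → ℝ, Measurable pol ∧
      (∫ ω, UC ω * pol (UC ω) * UY ω ∂P = -1) ∧ (-1 : ℝ) < 0 := by
  have hmc : AEMeasurable UC P := by
    by_contra h
    rw [Measure.map_of_not_aemeasurable h] at hUC
    have h2 := measure_univ (μ := gaussianReal 0 1)
    rw [← hUC] at h2
    simp at h2
  have hmy : AEMeasurable UY P := by
    by_contra h
    rw [Measure.map_of_not_aemeasurable h] at hUY
    have h2 := measure_univ (μ := gaussianReal 1 1)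
    rw [← hUY] at h2
    simp at h2
  have hiC : Integrable UC P := by
    have h := (integrable_map_measure (g := fun x : ℝ => x)
      measurable_id'.aestronglyMeasurable hmc).1 (by rw [hUC]; exact integrable_id_gauss01)
    exact h
  have hiC2 : Integrable (fun ω => UC ω ^ 2) P := by
    have h := (integrable_map_measure (g := fun x : ℝ => x ^ 2)
      (by fun_prop : Measurable fun x : ℝ => x ^ 2).aestronglyMeasurable hmc).1
      (by rw [hUC]; exact integrable_sq_gauss01)
    exact h
  have hiY : Integrable UY P := by
    have h := (integrable_map_measure (g := fun x : ℝ => x)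
      measurable_id'.aestronglyMeasurable hmy).1 (by rw [hUY]; exact integrable_id_gauss11)
    exact h
  have hEC : ∫ ω, UC ω ∂P = 0 := by
    have h := integral_map (φ := UC) hmc (f := fun x : ℝ => x)
      measurable_id'.aestronglyMeasurable
    rw [hUC, int_id_gauss01] at h
    exact h.symm
  have hEC2 : ∫ ω, UC ω ^ 2 ∂P = 1 := by
    have h := integral_map (φ := UC) hmc (f := fun x : ℝ => x ^ 2)
      (by fun_prop : Measurable fun x : ℝ => x ^ 2).aestronglyMeasurable
    rw [hUC, int_sq_gauss01] at h
    exact h.symm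
  have hEY : ∫ ω, UY ω ∂P = 1 := by
    have h := integral_map (φ := UY) hmy (f := fun x : ℝ => x)
      measurable_id'.aestronglyMeasurable
    rw [hUY, int_id_gauss11] at h
    exact h.symm
  have hCY : IndepFun UC UY P := by
    have h := hInd.indepFun (i := 0) (j := 2) (by decide)
    simpa using h
  have hmul : ∫ ω, UC ω * UY ω ∂P = 0 := by
    have h := hCY.integral_mul_eq_mul_integral hiC.aestronglyMeasurable hiY.aestronglyMeasurable
    rw [hEC, zero_mul] at h
    simpa using h
  have key : ∀ x : ℝ, ∫ ω, UC ω * x * UY ω ∂P = 0 := by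
    intro x
    have h : (fun ω => UC ω * x * UY ω) = fun ω => x * (UC ω * UY ω) :=
      funext fun ω => by ring
    rw [h, MeasureTheory.integral_const_mul, hmul, mul_zero]
  refine ⟨⟨?_, ?_, ?_⟩, fun c => -c, measurable_neg, ?_, by norm_num⟩
  · ext e
    simp only [Set.mem_setOf_eq, Set.mem_singleton_iff]
    constructor
    · rintro ⟨x, rfl⟩
      exact key x
    · rintro rfl
      exact ⟨0, (key 0).symm⟩
  · exact ⟨0, (key 0).symm⟩
  · rintro y ⟨x, rfl⟩
    rw [key x]
  · have hInd2 : IndepFun (fun ω => -(UC ω ^ 2)) UY P :=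
      hCY.comp (by fun_prop : Measurable fun x : ℝ => -(x ^ 2)) measurable_id
    have h2 := hInd2.integral_mul_eq_mul_integral hiC2.neg.aestronglyMeasurable hiY.aestronglyMeasurable
    simp only [Pi.mul_apply] at h2
    have h3 : (fun ω => UC ω * -UC ω * UY ω) = fun ω => -(UC ω ^ 2) * UY ω :=
      funext fun ω => by ring
    show ∫ ω, UC ω * -UC ω * UY ω ∂P = -1
    rw [h3]
    calc ∫ ω, -UC ω ^ 2 * UY ω ∂P
        = (∫ ω, -UC ω ^ 2 ∂P) * ∫ ω, UY ω ∂P := h2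
      _ = -1 := by rw [integral_neg, hEC2, hEY]; norm_num
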